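/- Let Σ and Δ be finite nonempty alphabets, n ≥ 1, and c : Σ × Σ^{≤n} → Δ⁺ a function. If for every context u ∈ Σ^{≤n} the map σ ↦ c(σ,u) is injective and the set C_u = {c(σ,u) : σ ∈ Σ} is a prefix code (no codeword in C_u is a proper prefix of a different codeword in C_u), then the homomorphic extension c̄ is injective, i.e., c is an adaptive code of order n. -/

import Mathlib

/-- The homomorphic extension `c̄` of a function `c : Σ × Σ^{≤n} → Δ⁺`:
the `i`-th codeword is determined by the `i`-th symbol together with the
(at most `n`) immediately preceding symbols. -/
def adaptiveExt {S D : Type*} (c : S → List S → List D) (n : ℕ) (w : List S) : List D :=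
  (List.finRange w.length).flatMap fun i => c (w.get i) ((w.take i).drop (i - n))

/-- Recursive reformulation of the extension: `p` is the list of symbols
already processed. -/
def restExt {S D : Type*} (c : S → List S → List D) (n : ℕ) : List S → List S → List D
  | _, [] => []
  | p, a :: t => c a (p.drop (p.length - n)) ++ restExt c n (p ++ [a]) t

lemma restExt_eq {S D : Type*} (c : S → List S → List D) (n : ℕ) :
    ∀ (w p : List S),
      ((List.finRange w.length).flatMap fun i =>
        c (w.get i) (((p ++ w).take (p.length + i)).drop (p.length + i - n)))
      = restExt c n p w := by
  intro w
  induction w with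
  | nil => intro p; simp [restExt]
  | cons a t ih =>
    intro p
    simp only [List.length_cons]
    rw [List.finRange_succ, List.flatMap_cons, List.flatMap_map]
    simp only [restExt]
    congr 1
    · simp [List.take_left]
    · have h2 := ih (p ++ [a])
      rw [← h2]
      congr 1
      funext i
      have hpp : p ++ a :: t = (p ++ [a]) ++ t := by simp
      have hl : p.length + (i.succ : ℕ) = (p ++ [a]).length + (i : ℕ) := by
        simp [Fin.val_succ]; omega
      rw [hpp, hl]
      rfl

lemma restExt_inj {S D : Type*} (n : ℕ) (c : S → List S → List D)
    (hne : ∀ (σ : S) (u : List S), u.length ≤ n → c σ u ≠ [])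
    (hinj : ∀ u : List S, u.length ≤ n → Function.Injective fun σ => c σ u)
    (hpref : ∀ u : List S, u.length ≤ n → ∀ σ σ' : S,
      (c σ u) <+: (c σ' u) → c σ u = c σ' u) :
    ∀ (w w' p : List S), restExt c n p w = restExt c n p w' → w = w' := by
  intro w
  induction w with
  | nil =>
    intro w' p h
    cases w' with
    | nil => rfl
    | cons b t' =>
      exfalso
      simp only [restExt] at h
      rcases List.append_eq_nil_iff.mp h.symm with ⟨h1, _⟩
      exact hne b _ (by rw [List.length_drop]; omega) h1
  | cons a t ih =>
    intro w' p h
    cases w' with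
    | nil =>
      exfalso
      simp only [restExt] at h
      rcases List.append_eq_nil_iff.mp h with ⟨h1, _⟩
      exact hne a _ (by rw [List.length_drop]; omega) h1
    | cons b t' =>
      simp only [restExt] at h
      set u := p.drop (p.length - n) with hu
      have hul : u.length ≤ n := by rw [hu, List.length_drop]; omega
      have hab : c a u = c b u := by
        have h1 : c a u <+: c b u ++ restExt c n (p ++ [b]) t' := ⟨_, h⟩
        have h2 : c b u <+: c b u ++ restExt c n (p ++ [b]) t' := ⟨_, rfl⟩
        rcases List.prefix_or_prefix_of_prefix h1 h2 with hp | hp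
        · exact hpref u hul a b hp
        · exact (hpref u hul b a hp).symm
      have hab' : a = b := hinj u hul hab
      subst hab'
      rw [hab] at h
      have := List.append_cancel_left h
      rw [ih t' (p ++ [a]) this]

lemma adaptiveExt_eq_restExt {S D : Type*} (c : S → List S → List D) (n : ℕ) (w : List S) :
    adaptiveExt c n w = restExt c n [] w := by
  rw [← restExt_eq c n w []]
  unfold adaptiveExt
  simp

/-- If, for every context `u ∈ Σ^{≤n}`, the map `σ ↦ c(σ,u)` is injective
and the set `C_u = {c(σ,u) : σ ∈ Σ}` is a prefix code (nonempty codewords,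
none a proper prefix of a different one), then the homomorphic extension
`c̄` is injective, i.e. `c` is an adaptive code of order `n`. -/
theorem adaptive_code_of_prefix_codes
    {S D : Type*} [Fintype S] [Nonempty S] [Fintype D] [Nonempty D]
    (n : ℕ) (hn : 1 ≤ n) (c : S → List S → List D)
    (hne : ∀ (σ : S) (u : List S), u.length ≤ n → c σ u ≠ [])
    (hinj : ∀ u : List S, u.length ≤ n → Function.Injective fun σ => c σ u)
    (hpref : ∀ u : List S, u.length ≤ n → ∀ σ σ' : S,
      (c σ u) <+: (c σ' u) → c σ u = c σ' u) :
    Function.Injective (adaptiveExt c n) := by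
  intro w w' h
  rw [adaptiveExt_eq_restExt, adaptiveExt_eq_restExt] at h
  exact restExt_inj n c hne hinj hpref w w' [] h
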